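/- arXiv:2012.10701 — 5 statements merged into one kernel-verified Lean document; each statement's English description precedes it below -/
import Mathlib

section
/- For α ∈ (d/(d+2), 1), there exists a constant C = C(d, α) such that for every probability density ρ on ℝ^d with finite second moment, Ent(ρ) ≥ −C(1 + m₂(ρ))^α, where Ent(ρ) = ∫ ρ log ρ and m₂(ρ) = ∫ ‖x‖² ρ(x) dx. -/
open MeasureTheory Real

noncomputable section

/-- `ℝ^d` with the Euclidean norm. -/
abbrev Esp (d : ℕ) := EuclideanSpace ℝ (Fin d)

/-- Pointwise Gibbs inequality: for `a ≥ 0` and `p > 0`,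
`a * log p + (a - p) ≤ a * log a`. -/
lemma gibbs_pointwise {a p : ℝ} (ha : 0 ≤ a) (hp : 0 < p) :
    a * Real.log p + (a - p) ≤ a * Real.log a := by
  rcases eq_or_lt_of_le ha with h | h
  · simp [← h]; linarith
  · have hlog : Real.log (p / a) ≤ p / a - 1 := Real.log_le_sub_one_of_pos (by positivity)
    rw [Real.log_div hp.ne' h.ne'] at hlog
    have := mul_le_mul_of_nonneg_left hlog (le_of_lt h)
    have hpa : a * (p / a - 1) = p - a := by field_simp
    nlinarith

lemma integrable_rexp_neg_mul_sq_norm {d : ℕ} {b : ℝ} (hb : 0 < b) :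
    Integrable (fun x : Esp d => Real.exp (-b * ‖x‖ ^ 2)) volume := by
  have h := GaussianFourier.integrable_cexp_neg_mul_sq_norm_add (V := Esp d)
      (b := (b : ℂ)) (by simpa using hb) 0 0
  have h2 := h.norm
  refine h2.congr (Filter.Eventually.of_forall fun x => ?_)
  simp only [mul_zero, zero_mul, add_zero, Complex.norm_exp]
  norm_cast

/-- for `α ∈ (d/(d+2), 1)` there is `C = C(d, α)` such that every
probability density `ρ` on `ℝ^d` with finite second moment satisfies
`Ent(ρ) ≥ −C (1 + m₂(ρ))^α`. -/
theorem entropy_lower_bound {d : ℕ} (α : ℝ)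
    (hα1 : (d : ℝ) / (d + 2) < α) (hα2 : α < 1) :
    ∃ C : ℝ, 0 < C ∧
      ∀ f : Esp d → ℝ, (∀ x, 0 ≤ f x) → Integrable f volume →
        (∫ x, f x ∂volume) = 1 →
        Integrable (fun x => ‖x‖ ^ 2 * f x) volume →
        Integrable (fun x => f x * Real.log (f x)) volume →
        -C * (1 + ∫ x, ‖x‖ ^ 2 * f x ∂volume) ^ α ≤
          ∫ x, f x * Real.log (f x) ∂volume := by
  have hα0 : 0 < α := lt_of_le_of_lt (by positivity) hα1
  refine ⟨1 / 2 + (d : ℝ) / 2 * Real.log (2 * π) + (d : ℝ) / (2 * α), ?_, ?_⟩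
  · have h2π : 0 < Real.log (2 * π) := Real.log_pos (by nlinarith [Real.pi_gt_three])
    positivity
  intro f hf_nonneg hf_int hf_one hm2 hent
  set m : ℝ := ∫ x, ‖x‖ ^ 2 * f x ∂volume with hm_def
  have hm0 : 0 ≤ m := integral_nonneg fun x => mul_nonneg (by positivity) (hf_nonneg x)
  set s : ℝ := 1 + m with hs_def
  have hs1 : 1 ≤ s := by simp [hs_def]; linarith
  have hs0 : 0 < s := lt_of_lt_of_le one_pos hs1
  set b : ℝ := 1 / (2 * s) with hb_def
  have hb0 : 0 < b := by positivity
  set Z : ℝ := (π / b) ^ ((d : ℝ) / 2) with hZ_def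
  have hπb : π / b = 2 * π * s := by
    rw [hb_def]; field_simp
  have hπb0 : 0 < π / b := by rw [hπb]; positivity
  have hZ0 : 0 < Z := Real.rpow_pos_of_pos hπb0 _
  -- the Gaussian density
  set g : Esp d → ℝ := fun x => Z⁻¹ * Real.exp (-b * ‖x‖ ^ 2) with hg_def
  have hg_pos : ∀ x, 0 < g x := fun x => by positivity
  have hg_int : Integrable g volume := (integrable_rexp_neg_mul_sq_norm hb0).const_mul _
  have hg_total : (∫ x, g x ∂volume) = 1 := by
    simp only [hg_def]
    rw [integral_const_mul, GaussianFourier.integral_rexp_neg_mul_sq_norm hb0,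
      finrank_euclideanSpace_fin, ← hZ_def]
    exact inv_mul_cancel₀ hZ0.ne'
  have hlog_g : ∀ x, Real.log (g x) = -b * ‖x‖ ^ 2 - Real.log Z := fun x => by
    rw [hg_def]
    rw [Real.log_mul (inv_ne_zero hZ0.ne') (Real.exp_ne_zero _), Real.log_inv, Real.log_exp]
    ring
  -- integrability of the comparison function
  have hI1 : Integrable (fun x => f x * Real.log (g x) + (f x - g x)) volume := by
    have heq : (fun x : Esp d => f x * Real.log (g x) + (f x - g x)) =
        fun x => (-b) * (‖x‖ ^ 2 * f x) + ((-Real.log Z) * f x + (f x - g x)) := by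
      funext x; rw [hlog_g x]; ring
    rw [heq]
    exact (hm2.const_mul _).add (((hf_int.const_mul _)).add (hf_int.sub hg_int))
  -- Gibbs inequality integrated
  have hmono : (∫ x, f x * Real.log (g x) + (f x - g x) ∂volume) ≤
      ∫ x, f x * Real.log (f x) ∂volume := by
    refine integral_mono hI1 hent fun x => ?_
    exact gibbs_pointwise (hf_nonneg x) (hg_pos x)
  -- compute the left integral
  have hcomp : (∫ x, f x * Real.log (g x) + (f x - g x) ∂volume) =
      -b * m - Real.log Z := by
    have heq : (fun x : Esp d => f x * Real.log (g x) + (f x - g x)) =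
        fun x => ((-b) * (‖x‖ ^ 2 * f x) + (-Real.log Z) * f x) + (f x - g x) := by
      funext x; rw [hlog_g x]; ring
    have hA : Integrable (fun x : Esp d => (-b) * (‖x‖ ^ 2 * f x)) volume :=
      hm2.const_mul (-b)
    have hB : Integrable (fun x : Esp d => (-Real.log Z) * f x) volume :=
      hf_int.const_mul (-Real.log Z)
    have hAB : Integrable
        (fun x : Esp d => (-b) * (‖x‖ ^ 2 * f x) + (-Real.log Z) * f x) volume := hA.add hB
    have hC : Integrable (fun x : Esp d => f x - g x) volume := hf_int.sub hg_int
    rw [heq, integral_add hAB hC, integral_add hA hB,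
      integral_sub hf_int hg_int, integral_const_mul, integral_const_mul,
      hf_one, hg_total, ← hm_def]
    ring
  -- numeric estimates
  have hlogZ : Real.log Z = (d : ℝ) / 2 * (Real.log (2 * π) + Real.log s) := by
    rw [hZ_def, Real.log_rpow hπb0, hπb, Real.log_mul (by positivity) hs0.ne']
  have hsα1 : (1 : ℝ) ≤ s ^ α := Real.one_le_rpow hs1 hα0.le
  have hlog_s : Real.log s ≤ s ^ α / α := by
    have h1 : Real.log (s ^ α) ≤ s ^ α - 1 :=
      Real.log_le_sub_one_of_pos (by positivity)
    rw [Real.log_rpow hs0] at h1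
    rw [le_div_iff₀ hα0]
    nlinarith
  have hbm : -b * m ≥ -(1 / 2) := by
    have : b * m ≤ 1 / 2 := by
      rw [hb_def]
      rw [div_mul_eq_mul_div, one_mul, div_le_div_iff₀ (by positivity) (by norm_num)]
      nlinarith
    linarith
  have h2π : 0 ≤ Real.log (2 * π) := (Real.log_pos (by nlinarith [Real.pi_gt_three])).le
  calc -(1 / 2 + (d : ℝ) / 2 * Real.log (2 * π) + (d : ℝ) / (2 * α)) * s ^ α
      ≤ -b * m - Real.log Z := by
        rw [hlogZ]
        have h1 : (1 / 2 : ℝ) * 1 ≤ (1 / 2 : ℝ) * s ^ α :=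
          mul_le_mul_of_nonneg_left hsα1 (by norm_num)
        have h2 : (d : ℝ) / 2 * Real.log (2 * π) * 1 ≤
            (d : ℝ) / 2 * Real.log (2 * π) * s ^ α :=
          mul_le_mul_of_nonneg_left hsα1 (by positivity)
        have h3 : (d : ℝ) / 2 * Real.log s ≤ (d : ℝ) / (2 * α) * s ^ α := by
          have := mul_le_mul_of_nonneg_left hlog_s (show (0:ℝ) ≤ (d:ℝ)/2 by positivity)
          calc (d : ℝ) / 2 * Real.log s ≤ (d : ℝ) / 2 * (s ^ α / α) := this
            _ = (d : ℝ) / (2 * α) * s ^ α := by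
                rw [div_mul_div_comm, div_mul_eq_mul_div]
        nlinarith
    _ ≤ _ := by rw [← hcomp]; exact hmono

end
end

section
/- Let Φ(S) = λI + E[(S^{1/2} S_ν S^{1/2})^{1/2}] where S_ν are random positive semi-definite d×d matrices with E[S_ν] ≤ σ²I and λ > 0. Set α = 2λ + dσ². Then Φ maps the set {S symmetric : λI ≤ S ≤ αI} into itself. -/
open MeasureTheory

noncomputable section

open Classical in
/-- Square root of a positive semi-definite matrix (junk value `0` otherwise). -/
def msqrt {d : ℕ} (A : Matrix (Fin d) (Fin d) ℝ) : Matrix (Fin d) (Fin d) ℝ :=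
  if h : A.PosSemidef then h.1.eigenvectorUnitary.1 * Matrix.diagonal ((↑) ∘ Real.sqrt ∘ h.1.eigenvalues) *
    (star h.1.eigenvectorUnitary : Matrix (Fin d) (Fin d) ℝ) else 0

section Aux

open Matrix

variable {d : ℕ}

lemma msqrt_posSemidef (A : Matrix (Fin d) (Fin d) ℝ) : (msqrt A).PosSemidef := by
  unfold msqrt
  split
  · next h =>
    have := (Matrix.PosSemidef.diagonal (d := ((fun x => x) ∘ Real.sqrt ∘ h.1.eigenvalues : Fin d → ℝ))
      (fun i => Real.sqrt_nonneg _)).mul_mul_conjTranspose_same h.1.eigenvectorUnitary.1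
    rw [← Matrix.star_eq_conjTranspose] at this
    exact this
  · exact .zero

lemma msqrt_mul_self {A : Matrix (Fin d) (Fin d) ℝ} (hA : A.PosSemidef) : msqrt A * msqrt A = A := by
  have hU : star hA.1.eigenvectorUnitary.1 * hA.1.eigenvectorUnitary.1 = 1 :=
    (Matrix.mem_unitaryGroup_iff').mp hA.1.eigenvectorUnitary.2
  unfold msqrt; rw [dif_pos hA]
  have hD : Matrix.diagonal ((↑) ∘ Real.sqrt ∘ hA.1.eigenvalues : Fin d → ℝ) *
      Matrix.diagonal ((↑) ∘ Real.sqrt ∘ hA.1.eigenvalues : Fin d → ℝ) =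
      Matrix.diagonal (RCLike.ofReal ∘ hA.1.eigenvalues : Fin d → ℝ) := by
    rw [Matrix.diagonal_mul_diagonal]; congr 1; funext i
    simp [Real.mul_self_sqrt (hA.eigenvalues_nonneg i)]
  conv_rhs => rw [hA.1.spectral_theorem, Unitary.conjStarAlgAut_apply]
  rw [← hD]
  simp only [← mul_assoc]
  rw [mul_assoc _ (star _) _, hU, mul_one]

lemma quad_le_of_psd {A : Matrix (Fin d) (Fin d) ℝ} {c : ℝ}
    (h : (c • (1 : Matrix (Fin d) (Fin d) ℝ) - A).PosSemidef) (v : Fin d → ℝ) :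
    v ⬝ᵥ A *ᵥ v ≤ c * (v ⬝ᵥ v) := by
  have := h.dotProduct_mulVec_nonneg v
  simp only [sub_mulVec, smul_mulVec, one_mulVec, dotProduct_sub, dotProduct_smul,
    star_trivial, smul_eq_mul] at this
  linarith

lemma psd_of_quad_le {A : Matrix (Fin d) (Fin d) ℝ} {c : ℝ} (hA : A.IsHermitian)
    (h : ∀ v : Fin d → ℝ, v ⬝ᵥ A *ᵥ v ≤ c * (v ⬝ᵥ v)) :
    (c • (1 : Matrix (Fin d) (Fin d) ℝ) - A).PosSemidef := by
  have h1 : (c • (1 : Matrix (Fin d) (Fin d) ℝ)).IsHermitian := by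
    simp [Matrix.IsHermitian, Matrix.conjTranspose_smul]
  refine .of_dotProduct_mulVec_nonneg (h1.sub hA) fun v => ?_
  simp only [sub_mulVec, smul_mulVec, one_mulVec, dotProduct_sub, dotProduct_smul,
    star_trivial, smul_eq_mul]
  linarith [h v]

lemma quad_le_trace {A : Matrix (Fin d) (Fin d) ℝ} (hA : A.PosSemidef) (v : Fin d → ℝ) :
    v ⬝ᵥ A *ᵥ v ≤ A.trace * (v ⬝ᵥ v) := by
  classical
  set B := msqrt A with hBdef
  have hB : B.PosSemidef := msqrt_posSemidef A
  have hBsymm : Bᵀ = B := by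
    exact (Matrix.conjTranspose_eq_transpose_of_trivial B).symm.trans hB.1
  have hAB : B * B = A := msqrt_mul_self hA
  have h1 : v ⬝ᵥ A *ᵥ v = (B *ᵥ v) ⬝ᵥ (B *ᵥ v) := by
    rw [← hAB, ← Matrix.mulVec_mulVec, Matrix.dotProduct_mulVec, ← Matrix.mulVec_transpose, hBsymm]
  have h2 : A.trace = ∑ i, ∑ j, (B i j) ^ 2 := by
    rw [← hAB, Matrix.trace]
    simp only [Matrix.diag, Matrix.mul_apply]
    refine Finset.sum_congr rfl fun i _ => Finset.sum_congr rfl fun j _ => ?_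
    rw [sq]
    congr 1
    exact congrFun (congrFun hBsymm i) j
  rw [h1, h2, Finset.sum_mul]
  have h3 : ∀ i, (B *ᵥ v) i * (B *ᵥ v) i ≤ (∑ j, (B i j) ^ 2) * (v ⬝ᵥ v) := by
    intro i
    have := Finset.sum_mul_sq_le_sq_mul_sq Finset.univ (fun j => B i j) v
    simpa [Matrix.mulVec, dotProduct, sq] using this
  calc (B *ᵥ v) ⬝ᵥ (B *ᵥ v) = ∑ i, (B *ᵥ v) i * (B *ᵥ v) i := rfl
    _ ≤ ∑ i, (∑ j, (B i j) ^ 2) * (v ⬝ᵥ v) := Finset.sum_le_sum fun i _ => h3 i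

lemma eigenvalues_le {A : Matrix (Fin d) (Fin d) ℝ} (hH : A.IsHermitian) {c : ℝ}
    (h : (c • (1 : Matrix (Fin d) (Fin d) ℝ) - A).PosSemidef) (i : Fin d) :
    hH.eigenvalues i ≤ c := by
  set v : Fin d → ℝ := ⇑(hH.eigenvectorBasis i) with hv
  have hAv : A *ᵥ v = hH.eigenvalues i • v := hH.mulVec_eigenvectorBasis i
  have hvne : v ≠ 0 := by
    intro h0
    have := hH.eigenvectorBasis.orthonormal.ne_zero i
    apply this
    ext j
    exact congrFun h0 j
  have hvpos : 0 < v ⬝ᵥ v := by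
    have hnn : 0 ≤ v ⬝ᵥ v := Finset.sum_nonneg fun j _ => mul_self_nonneg _
    exact lt_of_le_of_ne hnn (Ne.symm fun h0 => hvne (dotProduct_self_eq_zero.mp h0))
  have hq := quad_le_of_psd h v
  rw [hAv] at hq
  simp only [dotProduct_smul, smul_eq_mul] at hq
  exact le_of_mul_le_mul_right (by linarith) hvpos

lemma sqrt_le_of_le {A : Matrix (Fin d) (Fin d) ℝ} (hA : A.PosSemidef) {c : ℝ}
    (h : (c • (1 : Matrix (Fin d) (Fin d) ℝ) - A).PosSemidef) :
    (Real.sqrt c • (1 : Matrix (Fin d) (Fin d) ℝ) - msqrt A).PosSemidef := by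
  classical
  set U : Matrix (Fin d) (Fin d) ℝ := hA.1.eigenvectorUnitary.1 with hU
  have hUU : U * star U = 1 := (Matrix.mem_unitaryGroup_iff).mp hA.1.eigenvectorUnitary.2
  have hsqrt : msqrt A = U * Matrix.diagonal (fun i => Real.sqrt (hA.1.eigenvalues i)) * star U := by
    unfold msqrt; rw [dif_pos hA]
    rfl
  have hone : Real.sqrt c • (1 : Matrix (Fin d) (Fin d) ℝ) =
      U * Matrix.diagonal (fun _ => Real.sqrt c) * star U := by
    have h2 : Matrix.diagonal (fun _ : Fin d => Real.sqrt c) =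
        Real.sqrt c • (1 : Matrix (Fin d) (Fin d) ℝ) := (Matrix.smul_one_eq_diagonal _).symm
    rw [h2, Matrix.mul_smul, Matrix.smul_mul, Matrix.mul_one, hUU]
  have key : Real.sqrt c • (1 : Matrix (Fin d) (Fin d) ℝ) - msqrt A =
      U * Matrix.diagonal (fun i => Real.sqrt c - Real.sqrt (hA.1.eigenvalues i)) * star U := by
    rw [hone, hsqrt]
    have h3 : (Matrix.diagonal fun i => Real.sqrt c - Real.sqrt (hA.1.eigenvalues i)) =
        Matrix.diagonal (fun _ : Fin d => Real.sqrt c) -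
          Matrix.diagonal (fun i => Real.sqrt (hA.1.eigenvalues i)) := by
      rw [← Matrix.diagonal_sub]
    rw [h3, Matrix.mul_sub, Matrix.sub_mul]
  rw [key, Matrix.star_eq_conjTranspose]
  exact (Matrix.PosSemidef.diagonal fun i =>
    sub_nonneg.mpr (Real.sqrt_le_sqrt (eigenvalues_le hA.1 h i))).mul_mul_conjTranspose_same U

lemma integral_posSemidef {X : Type*} [MeasurableSpace X] (Q : Measure X)
    {f : X → Matrix (Fin d) (Fin d) ℝ}
    (hint : ∀ i j, Integrable (fun x => f x i j) Q)
    (hpsd : ∀ᵐ x ∂Q, (f x).PosSemidef) :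
    (Matrix.of fun i j => ∫ x, f x i j ∂Q).PosSemidef := by
  have hrep : ∀ v : Fin d → ℝ,
      v ⬝ᵥ ((Matrix.of fun i j => ∫ x, f x i j ∂Q) *ᵥ v) = ∫ x, v ⬝ᵥ (f x *ᵥ v) ∂Q := by
    intro v
    simp only [dotProduct, Matrix.mulVec, Matrix.of_apply]
    rw [integral_finset_sum _ (fun i _ => (integrable_finset_sum _
      (fun j _ => (hint i j).mul_const (v j))).const_mul (v i))]
    refine Finset.sum_congr rfl fun i _ => ?_
    rw [MeasureTheory.integral_const_mul, integral_finset_sum _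
      (fun j _ => (hint i j).mul_const (v j))]
    congr 1
    exact Finset.sum_congr rfl fun j _ => (MeasureTheory.integral_mul_const _ _).symm
  refine .of_dotProduct_mulVec_nonneg ?_ ?_
  · ext i j
    simp only [Matrix.conjTranspose_apply, Matrix.of_apply, star_trivial]
    refine integral_congr_ae ?_
    filter_upwards [hpsd] with x hx
    have h1 := congrFun (congrFun hx.1 i) j
    simpa [Matrix.conjTranspose_apply, star_trivial] using h1
  · intro v
    simp only [star_trivial]
    rw [hrep v]
    refine integral_nonneg_of_ae ?_
    filter_upwards [hpsd] with x hx
    simpa [star_trivial] using hx.dotProduct_mulVec_nonneg v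

lemma smul_one_posSemidef {c : ℝ} (hc : 0 ≤ c) :
    (c • (1 : Matrix (Fin d) (Fin d) ℝ)).PosSemidef := by
  rw [Matrix.smul_one_eq_diagonal]
  exact .diagonal fun _ => hc

lemma diag_nonneg {A : Matrix (Fin d) (Fin d) ℝ} (hA : A.PosSemidef) (i : Fin d) :
    0 ≤ A i i := by
  simpa [dotProduct, Matrix.mulVec, Pi.single_apply, Finset.sum_ite_eq] using
    hA.dotProduct_mulVec_nonneg (Pi.single i 1)

lemma trace_nonneg' {A : Matrix (Fin d) (Fin d) ℝ} (hA : A.PosSemidef) : 0 ≤ A.trace :=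
  Finset.sum_nonneg fun i _ => diag_nonneg hA i

end Aux

open Matrix in
/-- the map `Φ(S) = λI + E[(S^{1/2} S_ν S^{1/2})^{1/2}]` maps the
set `{S symmetric : λI ≤ S ≤ αI}` into itself, where `α = 2λ + dσ²`. -/
theorem gaussian_fixed_point_map_invariant {d : ℕ}
    {X : Type*} [MeasurableSpace X] (Q : Measure X) [IsProbabilityMeasure Q]
    (Sν : X → Matrix (Fin d) (Fin d) ℝ)
    (hpsd : ∀ᵐ x ∂Q, (Sν x).PosSemidef)
    (hint : ∀ i j, Integrable (fun x => Sν x i j) Q)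
    (σ lam : ℝ) (hσ : 0 < σ) (hlam : 0 < lam)
    (hE : (σ ^ 2 • (1 : Matrix (Fin d) (Fin d) ℝ) -
      Matrix.of fun i j => ∫ x, Sν x i j ∂Q).PosSemidef)
    (S : Matrix (Fin d) (Fin d) ℝ) (hSsymm : S.IsSymm)
    (hSlow : (S - lam • (1 : Matrix (Fin d) (Fin d) ℝ)).PosSemidef)
    (hShigh : (((2 * lam + d * σ ^ 2) • (1 : Matrix (Fin d) (Fin d) ℝ)) - S).PosSemidef)
    (hint' : ∀ i j, Integrable (fun x => msqrt (msqrt S * Sν x * msqrt S) i j) Q) :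
    (lam • (1 : Matrix (Fin d) (Fin d) ℝ) +
        Matrix.of (fun i j => ∫ x, msqrt (msqrt S * Sν x * msqrt S) i j ∂Q) -
        lam • (1 : Matrix (Fin d) (Fin d) ℝ)).PosSemidef ∧
      (((2 * lam + d * σ ^ 2) • (1 : Matrix (Fin d) (Fin d) ℝ)) -
        (lam • (1 : Matrix (Fin d) (Fin d) ℝ) +
          Matrix.of (fun i j => ∫ x, msqrt (msqrt S * Sν x * msqrt S) i j ∂Q))).PosSemidef := by
  classical
  set α : ℝ := 2 * lam + d * σ ^ 2 with hα
  have hα0 : 0 ≤ α := by positivity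
  have hS : S.PosSemidef := by
    have := hSlow.add (smul_one_posSemidef hlam.le)
    simpa using this
  set B := msqrt S with hBset
  have hBpsd : B.PosSemidef := msqrt_posSemidef S
  have hBH : Bᴴ = B := hBpsd.1
  have hBt : Bᵀ = B := by
    ext i j
    have := congrFun (congrFun hBH i) j
    simpa using this
  have hBB : B * B = S := msqrt_mul_self hS
  set Mint : Matrix (Fin d) (Fin d) ℝ :=
    Matrix.of (fun i j => ∫ x, msqrt (B * Sν x * B) i j ∂Q) with hMint
  constructor
  · rw [add_sub_cancel_left]
    exact integral_posSemidef Q hint' (Filter.Eventually.of_forall fun x => msqrt_posSemidef _)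
  · set tr : X → ℝ := fun x => (Sν x).trace with htrdef
    have htr_int : Integrable tr Q := by
      have h1 : Integrable (fun x => ∑ i, Sν x i i) Q :=
        integrable_finset_sum _ fun i _ => hint i i
      simpa [htrdef, Matrix.trace, Matrix.diag] using h1
    have hgpsd : ∀ᵐ x ∂Q, (((α + tr x) / 2) • (1 : Matrix (Fin d) (Fin d) ℝ) -
        msqrt (B * Sν x * B)).PosSemidef := by
      filter_upwards [hpsd] with x hx
      have hT : (B * Sν x * B).PosSemidef := by
        have := hx.mul_mul_conjTranspose_same B
        rwa [hBH] at this
      have htr0 : 0 ≤ tr x := trace_nonneg' hx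
      have hquad : ∀ v : Fin d → ℝ, v ⬝ᵥ (B * Sν x * B) *ᵥ v ≤ (α * tr x) * (v ⬝ᵥ v) := by
        intro v
        have h1 : v ⬝ᵥ (B * Sν x * B) *ᵥ v = (B *ᵥ v) ⬝ᵥ (Sν x *ᵥ (B *ᵥ v)) := by
          rw [← Matrix.mulVec_mulVec, ← Matrix.mulVec_mulVec, Matrix.dotProduct_mulVec v B,
            ← Matrix.mulVec_transpose, hBt]
        have h2 := quad_le_trace hx (B *ᵥ v)
        have h3 : (B *ᵥ v) ⬝ᵥ (B *ᵥ v) = v ⬝ᵥ S *ᵥ v := by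
          rw [Matrix.dotProduct_mulVec, ← Matrix.mulVec_transpose, hBt, Matrix.mulVec_mulVec, hBB]
          exact dotProduct_comm _ _
        have h4 : v ⬝ᵥ S *ᵥ v ≤ α * (v ⬝ᵥ v) := quad_le_of_psd hShigh v
        rw [h1]
        rw [h3] at h2
        nlinarith [mul_le_mul_of_nonneg_left h4 htr0]
      have hTle := psd_of_quad_le hT.1 hquad
      have hs := sqrt_le_of_le hT hTle
      have hscal : Real.sqrt (α * tr x) ≤ (α + tr x) / 2 := by
        nlinarith [sq_nonneg (Real.sqrt α - Real.sqrt (tr x)), Real.sq_sqrt hα0,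
          Real.sq_sqrt htr0, Real.sqrt_nonneg (α * tr x), Real.sqrt_mul hα0 (tr x),
          Real.sqrt_nonneg α, Real.sqrt_nonneg (tr x)]
      have hsum := hs.add (smul_one_posSemidef
        (by linarith : (0 : ℝ) ≤ (α + tr x) / 2 - Real.sqrt (α * tr x)))
      have hid : ((α + tr x) / 2) • (1 : Matrix (Fin d) (Fin d) ℝ) - msqrt (B * Sν x * B) =
          (Real.sqrt (α * tr x) • 1 - msqrt (B * Sν x * B)) +
            (((α + tr x) / 2 - Real.sqrt (α * tr x)) • (1 : Matrix (Fin d) (Fin d) ℝ)) := by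
        rw [sub_smul]; abel
      rw [hid]
      exact hsum
    have hgint : ∀ i j, Integrable (fun x =>
        (((α + tr x) / 2) • (1 : Matrix (Fin d) (Fin d) ℝ) - msqrt (B * Sν x * B)) i j) Q := by
      intro i j
      have h1 : Integrable (fun x => (α + tr x) / 2 * (1 : Matrix (Fin d) (Fin d) ℝ) i j) Q :=
        (((integrable_const α).add htr_int).div_const 2).mul_const _
      have := h1.sub (hint' i j)
      simpa [Matrix.sub_apply, Matrix.smul_apply, smul_eq_mul, Pi.sub_def] using this
    have hMg := integral_posSemidef Q hgint hgpsd
    have hEtr : ∫ x, tr x ∂Q ≤ d * σ ^ 2 := by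
      have hEd : ∀ i, (∫ x, Sν x i i ∂Q) ≤ σ ^ 2 := by
        intro i
        have h5 := quad_le_of_psd hE (Pi.single i 1)
        simpa [dotProduct, Matrix.mulVec, Pi.single_apply, Finset.sum_ite_eq] using h5
      have h6 : ∫ x, tr x ∂Q = ∑ i, ∫ x, Sν x i i ∂Q := by
        have h7 : ∫ x, tr x ∂Q = ∫ x, ∑ i, Sν x i i ∂Q := by
          simp [htrdef, Matrix.trace, Matrix.diag]
        rw [h7, integral_finset_sum _ fun i _ => hint i i]
      rw [h6]
      calc ∑ i, ∫ x, Sν x i i ∂Q ≤ ∑ _i : Fin d, σ ^ 2 := Finset.sum_le_sum fun i _ => hEd i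
        _ = d * σ ^ 2 := by simp [Finset.sum_const, mul_comm]
    set cint : ℝ := (α + ∫ x, tr x ∂Q) / 2 with hcint
    have hMgId : (Matrix.of fun i j => ∫ x,
        (((α + tr x) / 2) • (1 : Matrix (Fin d) (Fin d) ℝ) - msqrt (B * Sν x * B)) i j ∂Q) =
        cint • (1 : Matrix (Fin d) (Fin d) ℝ) - Mint := by
      ext i j
      simp only [Matrix.of_apply, Matrix.sub_apply, Matrix.smul_apply, smul_eq_mul, hMint]
      have h1 : Integrable (fun x => (α + tr x) / 2 * (1 : Matrix (Fin d) (Fin d) ℝ) i j) Q :=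
        (((integrable_const α).add htr_int).div_const 2).mul_const _
      rw [integral_sub h1 (hint' i j)]
      congr 1
      rw [MeasureTheory.integral_mul_const]
      congr 1
      rw [integral_div, integral_add (integrable_const α) htr_int, integral_const]
      simp [measure_univ, hcint]
    rw [hMgId] at hMg
    have hcintle : cint ≤ α - lam := by
      rw [hcint, hα]
      linarith [hEtr]
    have hfinal : α • (1 : Matrix (Fin d) (Fin d) ℝ) - (lam • 1 + Mint) =
        (cint • (1 : Matrix (Fin d) (Fin d) ℝ) - Mint) +
          ((α - lam - cint) • (1 : Matrix (Fin d) (Fin d) ℝ)) := by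
      rw [sub_smul, sub_smul]; abel
    rw [hfinal]
    exact hMg.add (smul_one_posSemidef (by linarith))

end
end

section
/- Let B̄ be a closed ball in ℝ^d centered at the origin with radius R, and let φ ∈ C¹(B̄) be strictly convex. Then ∇φ(B̄) = B̄ if and only if ∇φ(∂B) ⊆ ∂B. -/
open Metric

open Set Filter Topology
open scoped RealInnerProductSpace

set_option maxHeartbeats 1000000

noncomputable section

namespace GradBallAux

variable {d : ℕ} {R : ℝ} {φ : Esp d → ℝ} {φ' : Esp d → Esp d}

lemma inner_expand (a b : Esp d) (s : ℝ) :
    ⟪a + s • b, a + s • b⟫ = ⟪a, a⟫ + 2 * s * ⟪a, b⟫ + s ^ 2 * ⟪b, b⟫ := by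
  simp only [inner_add_left, inner_add_right, real_inner_smul_left,
    real_inner_smul_right, real_inner_comm b a]
  ring

lemma line_mem {x y : Esp d} (hx : x ∈ closedBall (0 : Esp d) R)
    (hy : y ∈ closedBall (0 : Esp d) R) {t : ℝ} (ht : t ∈ Icc (0 : ℝ) 1) :
    x + t • (y - x) ∈ closedBall (0 : Esp d) R :=
  (convex_closedBall (0 : Esp d) R).add_smul_sub_mem hx hy ht

/-- The slope of `φ` along the segment from `x` to `y` tends to the directional
derivative `⟪g, y - x⟫`. -/
lemma slope_tendsto {x y : Esp d} (hx : x ∈ closedBall (0 : Esp d) R)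
    (hy : y ∈ closedBall (0 : Esp d) R) {g : Esp d}
    (hdiff : HasGradientWithinAt φ g (closedBall (0 : Esp d) R) x) :
    Tendsto (fun t : ℝ => (φ (x + t • (y - x)) - φ x) / t) (𝓝[>] (0 : ℝ))
      (𝓝 (⟪g, y - x⟫)) := by
  set L : ℝ → Esp d := fun s => x + s • (y - x) with hLdef
  have hL : HasDerivWithinAt L (y - x) (Icc (0 : ℝ) 1) 0 := by
    have h1 : HasDerivAt L ((1 : ℝ) • (y - x)) 0 :=
      ((hasDerivAt_id (0 : ℝ)).smul_const (y - x)).const_add x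
    simpa using h1.hasDerivWithinAt
  have hmaps : MapsTo L (Icc (0 : ℝ) 1) (closedBall (0 : Esp d) R) := fun t ht =>
    line_mem hx hy ht
  have hfd : HasFDerivWithinAt φ ((InnerProductSpace.toDual ℝ (Esp d)) g)
      (closedBall (0 : Esp d) R) (L 0) := by
    have : L 0 = x := by simp [hLdef]
    rw [this]
    exact hdiff
  have hcomp : HasDerivWithinAt (φ ∘ L)
      ((InnerProductSpace.toDual ℝ (Esp d)) g (y - x)) (Icc (0 : ℝ) 1) 0 :=
    hfd.comp_hasDerivWithinAt 0 hL hmaps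
  have hval : (InnerProductSpace.toDual ℝ (Esp d)) g (y - x) = ⟪g, y - x⟫ := by
    simp [InnerProductSpace.toDual_apply_apply]
  rw [hval] at hcomp
  have htend := hasDerivWithinAt_iff_tendsto_slope.mp hcomp
  have hsub : 𝓝[>] (0 : ℝ) ≤ 𝓝[Icc (0 : ℝ) 1 \ {0}] 0 := by
    rw [← nhdsWithin_Ioc_eq_nhdsGT (zero_lt_one)]
    apply nhdsWithin_mono
    intro t ht
    exact ⟨⟨le_of_lt ht.1, ht.2⟩, ne_of_gt ht.1⟩
  have := htend.mono_left hsub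
  apply this.congr'
  filter_upwards [self_mem_nhdsWithin] with t (ht : 0 < t)
  simp only [slope, Function.comp, hLdef]
  rw [vsub_eq_sub, sub_zero]
  simp [div_eq_inv_mul]

/-- Non-strict gradient inequality for convex functions. -/
lemma grad_le {x y : Esp d} (hx : x ∈ closedBall (0 : Esp d) R)
    (hy : y ∈ closedBall (0 : Esp d) R)
    (hdiff : HasGradientWithinAt φ (φ' x) (closedBall (0 : Esp d) R) x)
    (hconv : ConvexOn ℝ (closedBall (0 : Esp d) R) φ) :
    φ x + ⟪φ' x, y - x⟫ ≤ φ y := by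
  have htd := slope_tendsto hx hy hdiff
  have hbound : ∀ᶠ t in 𝓝[>] (0 : ℝ),
      (φ (x + t • (y - x)) - φ x) / t ≤ φ y - φ x := by
    filter_upwards [Ioo_mem_nhdsGT_of_mem (Set.left_mem_Ico.mpr zero_lt_one)]
      with t ht
    have h1 : φ (x + t • (y - x)) ≤ (1 - t) * φ x + t * φ y := by
      have heq : x + t • (y - x) = (1 - t) • x + t • y := by
        rw [smul_sub, sub_smul, one_smul]; abel
      rw [heq]
      exact hconv.2 hx hy (by linarith [ht.2]) (le_of_lt ht.1) (by ring)
    rw [div_le_iff₀ ht.1]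
    nlinarith [ht.1]
  linarith [le_of_tendsto htd hbound]

/-- Strict gradient inequality for strictly convex functions. -/
lemma grad_lt (hφdiff : ∀ x ∈ closedBall (0 : Esp d) R,
      HasGradientWithinAt φ (φ' x) (closedBall (0 : Esp d) R) x)
    (hφconv : StrictConvexOn ℝ (closedBall (0 : Esp d) R) φ)
    {x y : Esp d} (hx : x ∈ closedBall (0 : Esp d) R)
    (hy : y ∈ closedBall (0 : Esp d) R) (hne : x ≠ y) :
    φ x + ⟪φ' x, y - x⟫ < φ y := by
  set m : Esp d := x + (2⁻¹ : ℝ) • (y - x) with hm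
  have hmB : m ∈ closedBall (0 : Esp d) R :=
    line_mem hx hy ⟨by norm_num, by norm_num⟩
  have h1 : φ x + ⟪φ' x, m - x⟫ ≤ φ m :=
    grad_le hx hmB (hφdiff x hx) hφconv.convexOn
  have h2 : φ m < (2⁻¹ : ℝ) * φ x + (2⁻¹ : ℝ) * φ y := by
    have heq : m = (2⁻¹ : ℝ) • x + (2⁻¹ : ℝ) • y := by
      rw [hm, smul_sub]
      module
    rw [heq]
    exact hφconv.2 hx hy hne (by norm_num) (by norm_num) (by norm_num)
  have h3 : ⟪φ' x, m - x⟫ = 2⁻¹ * ⟪φ' x, y - x⟫ := by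
    have : m - x = (2⁻¹ : ℝ) • (y - x) := by rw [hm]; abel
    rw [this, real_inner_smul_right]
  rw [h3] at h1
  linarith

/-- Strict monotonicity of the gradient. -/
lemma grad_mono (hφdiff : ∀ x ∈ closedBall (0 : Esp d) R,
      HasGradientWithinAt φ (φ' x) (closedBall (0 : Esp d) R) x)
    (hφconv : StrictConvexOn ℝ (closedBall (0 : Esp d) R) φ)
    {x y : Esp d} (hx : x ∈ closedBall (0 : Esp d) R)
    (hy : y ∈ closedBall (0 : Esp d) R) (hne : x ≠ y) :
    0 < ⟪φ' y - φ' x, y - x⟫ := by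
  have h1 := grad_lt hφdiff hφconv hx hy hne
  have h2 := grad_lt hφdiff hφconv hy hx hne.symm
  have h3 : ⟪φ' y, x - y⟫ = -⟪φ' y, y - x⟫ := by
    rw [← inner_neg_right]; congr 1; abel
  rw [inner_sub_left]
  rw [h3] at h2
  linarith

/-- First-order optimality condition at a minimizer of `φ - ⟪p, ·⟫` over the ball. -/
lemma first_order (hφdiff : ∀ x ∈ closedBall (0 : Esp d) R,
      HasGradientWithinAt φ (φ' x) (closedBall (0 : Esp d) R) x)
    {p x₀ : Esp d} (hx₀ : x₀ ∈ closedBall (0 : Esp d) R)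
    (hmin : ∀ y ∈ closedBall (0 : Esp d) R, φ x₀ - ⟪p, x₀⟫ ≤ φ y - ⟪p, y⟫)
    {y : Esp d} (hy : y ∈ closedBall (0 : Esp d) R) :
    ⟪p, y - x₀⟫ ≤ ⟪φ' x₀, y - x₀⟫ := by
  have htd := slope_tendsto hx₀ hy (hφdiff x₀ hx₀)
  refine ge_of_tendsto htd ?_
  filter_upwards [Ioo_mem_nhdsGT_of_mem (Set.left_mem_Ico.mpr zero_lt_one)]
    with t ht
  have hmem : x₀ + t • (y - x₀) ∈ closedBall (0 : Esp d) R :=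
    line_mem hx₀ hy ⟨le_of_lt ht.1, le_of_lt ht.2⟩
  have h1 := hmin _ hmem
  have h2 : ⟪p, x₀ + t • (y - x₀)⟫ = ⟪p, x₀⟫ + t * ⟪p, y - x₀⟫ := by
    rw [inner_add_right, real_inner_smul_right]
  rw [le_div_iff₀ ht.1]
  nlinarith [ht.1]

end GradBallAux

open GradBallAux

/-- for a strictly convex `φ ∈ C¹(B̄)` on the closed ball `B̄` of
radius `R` centered at the origin, with continuous gradient `φ'`,
`∇φ(B̄) = B̄` if and only if `∇φ(∂B) ⊆ ∂B`. -/
theorem gradient_ball_iff_sphere {d : ℕ} (R : ℝ) (hR : 0 < R)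
    (φ : Esp d → ℝ) (φ' : Esp d → Esp d)
    (hφdiff : ∀ x ∈ closedBall (0 : Esp d) R,
      HasGradientWithinAt φ (φ' x) (closedBall (0 : Esp d) R) x)
    (hφ'cont : ContinuousOn φ' (closedBall (0 : Esp d) R))
    (hφconv : StrictConvexOn ℝ (closedBall (0 : Esp d) R) φ) :
    φ' '' closedBall (0 : Esp d) R = closedBall (0 : Esp d) R ↔
      φ' '' sphere (0 : Esp d) R ⊆ sphere (0 : Esp d) R := by
  have mono := fun {x y : Esp d} hx hy hne =>
    grad_mono (R := R) hφdiff hφconv (x := x) (y := y) hx hy hne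
  constructor
  · -- forward direction
    intro himg
    rintro q ⟨x, hxS, rfl⟩
    have hxR : ‖x‖ = R := mem_sphere_zero_iff_norm.mp hxS
    have hxB : x ∈ closedBall (0 : Esp d) R := sphere_subset_closedBall hxS
    have hφxB : φ' x ∈ closedBall (0 : Esp d) R := by
      rw [← himg]; exact Set.mem_image_of_mem φ' hxB
    have hφxle : ‖φ' x‖ ≤ R := mem_closedBall_zero_iff.mp hφxB
    rw [mem_sphere_zero_iff_norm]
    by_contra hne
    have hφxlt : ‖φ' x‖ < R := lt_of_le_of_ne hφxle hne
    set t : ℝ := (R - ‖φ' x‖) / R with htdef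
    have ht : 0 < t := div_pos (by linarith) hR
    set z : Esp d := φ' x + t • x with hz
    have hzB : z ∈ closedBall (0 : Esp d) R := by
      rw [mem_closedBall_zero_iff]
      calc ‖φ' x + t • x‖ ≤ ‖φ' x‖ + ‖t • x‖ := norm_add_le _ _
        _ = ‖φ' x‖ + t * R := by
            rw [norm_smul, Real.norm_of_nonneg (le_of_lt ht), hxR]
        _ = R := by rw [htdef]; field_simp; ring
    obtain ⟨y, hyB, hyz⟩ : ∃ y ∈ closedBall (0 : Esp d) R, φ' y = z := by
      have hmem : z ∈ φ' '' closedBall (0 : Esp d) R := by rw [himg]; exact hzB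
      obtain ⟨y, hy, hyz⟩ := hmem
      exact ⟨y, hy, hyz⟩
    have hyx : x ≠ y := by
      intro h
      have h0 : φ' x + t • x = φ' x := by rw [← hz, ← hyz, ← h]
      have h1 : t • x = 0 := by
        have := congrArg (fun w => w - φ' x) h0
        simpa using this
      rcases smul_eq_zero.mp h1 with h2 | h3
      · exact absurd h2 (ne_of_gt ht)
      · rw [h3, norm_zero] at hxR; linarith
    have hm := mono hxB hyB hyx
    rw [hyz, hz] at hm
    have hsimp : φ' x + t • x - φ' x = t • x := by abel
    rw [hsimp, real_inner_smul_left, inner_sub_right] at hm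
    have h1 : ⟪x, x⟫ = R ^ 2 := by
      rw [real_inner_self_eq_norm_sq, hxR]
    have h2 : ⟪x, y⟫ ≤ R ^ 2 := by
      calc ⟪x, y⟫ ≤ ‖x‖ * ‖y‖ := real_inner_le_norm x y
        _ ≤ R * R := by
            have := mem_closedBall_zero_iff.mp hyB
            exact mul_le_mul (le_of_eq hxR) this (norm_nonneg y) (le_of_lt hR)
        _ = R ^ 2 := by ring
    nlinarith
  · -- backward direction
    intro hsph
    have hsphere_norm : ∀ x : Esp d, ‖x‖ = R → ‖φ' x‖ = R := by
      intro x hx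
      exact mem_sphere_zero_iff_norm.mp
        (hsph (Set.mem_image_of_mem φ' (mem_sphere_zero_iff_norm.mpr hx)))
    apply Set.Subset.antisymm
    · -- image ⊆ ball
      rintro q ⟨x, hxB, rfl⟩
      by_cases hxS : ‖x‖ = R
      · exact sphere_subset_closedBall (mem_sphere_zero_iff_norm.mpr (hsphere_norm x hxS))
      have hxlt : ‖x‖ < R := lt_of_le_of_ne (mem_closedBall_zero_iff.mp hxB) hxS
      rw [mem_closedBall_zero_iff]
      by_contra hgt
      push_neg at hgt
      have hφx0 : φ' x ≠ 0 := by
        intro h; rw [h, norm_zero] at hgt; linarith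
      have hφxn : (0 : ℝ) < ‖φ' x‖ := norm_pos_iff.mpr hφx0
      set u : Esp d := ‖φ' x‖⁻¹ • φ' x with hu
      have hun : ‖u‖ = 1 := norm_smul_inv_norm hφx0
      set b : ℝ := ⟪x, u⟫ with hb
      have hxsq : ‖x‖ ^ 2 < R ^ 2 := by nlinarith [norm_nonneg x]
      have harg : (0 : ℝ) ≤ b ^ 2 + (R ^ 2 - ‖x‖ ^ 2) := by
        nlinarith [sq_nonneg b]
      set t : ℝ := -b + Real.sqrt (b ^ 2 + (R ^ 2 - ‖x‖ ^ 2)) with htdef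
      have hsqgt : |b| < Real.sqrt (b ^ 2 + (R ^ 2 - ‖x‖ ^ 2)) := by
        rw [← Real.sqrt_sq_eq_abs]
        exact Real.sqrt_lt_sqrt (sq_nonneg b) (by nlinarith)
      have ht : 0 < t := by
        have := le_abs_self b
        rw [htdef]; linarith
      have hsq : (t + b) ^ 2 = b ^ 2 + (R ^ 2 - ‖x‖ ^ 2) := by
        rw [htdef]
        have heq : -b + Real.sqrt (b ^ 2 + (R ^ 2 - ‖x‖ ^ 2)) + b
            = Real.sqrt (b ^ 2 + (R ^ 2 - ‖x‖ ^ 2)) := by ring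
        rw [heq, Real.sq_sqrt harg]
      set y : Esp d := x + t • u with hy
      have hyn2 : ‖y‖ ^ 2 = R ^ 2 := by
        have h0 : ⟪y, y⟫ = ⟪x, x⟫ + 2 * t * ⟪x, u⟫ + t ^ 2 * ⟪u, u⟫ := by
          rw [hy]; exact inner_expand x u t
        have h1 : ⟪x, x⟫ = ‖x‖ ^ 2 := real_inner_self_eq_norm_sq x
        have h2 : ⟪u, u⟫ = 1 := by
          rw [real_inner_self_eq_norm_sq, hun]; norm_num
        have h3 : ‖y‖ ^ 2 = ⟪y, y⟫ := (real_inner_self_eq_norm_sq y).symm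
        rw [h3, h0, h1, h2, ← hb]
        nlinarith [hsq]
      have hynR : ‖y‖ = R := by
        have h1 : (‖y‖ - R) * (‖y‖ + R) = 0 := by nlinarith
        rcases mul_eq_zero.mp h1 with h | h
        · linarith
        · nlinarith [norm_nonneg y]
      have hyB : y ∈ closedBall (0 : Esp d) R := mem_closedBall_zero_iff.mpr hynR.le
      have hφyR : ‖φ' y‖ = R := hsphere_norm y hynR
      have hxy : x ≠ y := by
        intro h
        have h0 : t • u = 0 := by
          have := congrArg (fun w => w - x) (h.trans hy)
          simpa using this.symm
        rcases smul_eq_zero.mp h0 with h1 | h2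
        · exact absurd h1 (ne_of_gt ht)
        · rw [h2, norm_zero] at hun; norm_num at hun
      have hm := mono hxB hyB hxy
      have hyx : y - x = t • u := by rw [hy]; abel
      have hAeq : ⟪φ' y - φ' x, y - x⟫ = t * ⟪φ' y, u⟫ - t * ⟪φ' x, u⟫ := by
        rw [hyx, inner_sub_left,
          show ⟪φ' y, t • u⟫ = t * ⟪φ' y, u⟫ from real_inner_smul_right _ _ _,
          show ⟪φ' x, t • u⟫ = t * ⟪φ' x, u⟫ from real_inner_smul_right _ _ _]
      rw [hAeq] at hm
      have h1 : ⟪φ' x, u⟫ = ‖φ' x‖ := by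
        rw [hu, real_inner_smul_right, real_inner_self_eq_norm_sq, sq,
          inv_mul_cancel_left₀ (ne_of_gt hφxn)]
      have h2 : ⟪φ' y, u⟫ ≤ R := by
        calc ⟪φ' y, u⟫ ≤ ‖φ' y‖ * ‖u‖ := real_inner_le_norm _ _
          _ = R := by rw [hφyR, hun, mul_one]
      have hlt : ⟪φ' y, u⟫ - ⟪φ' x, u⟫ < 0 := by rw [h1]; linarith
      nlinarith [mul_pos ht (neg_pos.mpr hlt)]
    · -- ball ⊆ image
      have hball : ball (0 : Esp d) R ⊆ φ' '' closedBall (0 : Esp d) R := by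
        intro p hp
        have hpR : ‖p‖ < R := mem_ball_zero_iff.mp hp
        have hψc : ContinuousOn (fun z : Esp d => φ z - ⟪p, z⟫)
            (closedBall (0 : Esp d) R) := by
          apply ContinuousOn.sub
          · intro z hz
            exact (hφdiff z hz).continuousWithinAt
          · exact (Continuous.inner continuous_const continuous_id).continuousOn
        obtain ⟨x₀, hx₀B, hmin'⟩ := (isCompact_closedBall (0 : Esp d) R).exists_isMinOn
          ⟨0, mem_closedBall_self hR.le⟩ hψc
        have hmin : ∀ y ∈ closedBall (0 : Esp d) R,
            φ x₀ - ⟪p, x₀⟫ ≤ φ y - ⟪p, y⟫ := fun y hy => hmin' hy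
        have hfoc : ∀ y ∈ closedBall (0 : Esp d) R,
            ⟪p, y - x₀⟫ ≤ ⟪φ' x₀, y - x₀⟫ := fun y hy =>
          first_order hφdiff hx₀B hmin hy
        by_cases hxin : ‖x₀‖ < R
        · -- interior minimizer
          refine ⟨x₀, hx₀B, ?_⟩
          by_contra hne
          set v : Esp d := φ' x₀ - p with hv
          have hv0 : v ≠ 0 := sub_ne_zero.mpr hne
          have hvpos : 0 < ‖v‖ := norm_pos_iff.mpr hv0
          set ε : ℝ := (R - ‖x₀‖) / ‖v‖ with hε
          have hεpos : 0 < ε := div_pos (by linarith) hvpos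
          have hyB : x₀ - ε • v ∈ closedBall (0 : Esp d) R := by
            rw [mem_closedBall_zero_iff]
            calc ‖x₀ - ε • v‖ ≤ ‖x₀‖ + ‖ε • v‖ := norm_sub_le _ _
              _ = ‖x₀‖ + ε * ‖v‖ := by
                  rw [norm_smul, Real.norm_of_nonneg hεpos.le]
              _ = R := by rw [hε]; field_simp; ring
          have h1 := hfoc _ hyB
          have h2 : x₀ - ε • v - x₀ = -(ε • v) := by abel
          rw [h2, inner_neg_right, inner_neg_right, real_inner_smul_right,
            real_inner_smul_right] at h1
          have h3 : ⟪φ' x₀, v⟫ - ⟪p, v⟫ = ⟪v, v⟫ := by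
            rw [hv, inner_sub_left]
          have h4 : ⟪v, v⟫ = ‖v‖ ^ 2 := real_inner_self_eq_norm_sq v
          nlinarith [mul_pos hεpos (mul_pos hvpos hvpos)]
        · -- boundary minimizer: contradiction
          exfalso
          have hx₀R : ‖x₀‖ = R :=
            le_antisymm (mem_closedBall_zero_iff.mp hx₀B) (not_lt.mp hxin)
          set q : Esp d := φ' x₀ with hq
          have hqR : ‖q‖ = R := hsphere_norm x₀ hx₀R
          set v : Esp d := q - p with hv
          have hv0 : v ≠ 0 := by
            intro h
            have : q = p := by rwa [hv, sub_eq_zero] at h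
            rw [this] at hqR; linarith
          have hvpos : 0 < ‖v‖ := norm_pos_iff.mpr hv0
          -- test point -(R/‖v‖) • v
          have hy₁B : (-(R / ‖v‖)) • v ∈ closedBall (0 : Esp d) R := by
            rw [mem_closedBall_zero_iff, norm_smul, Real.norm_of_nonpos
              (neg_nonpos.mpr (div_nonneg hR.le (norm_nonneg v))), neg_neg,
              div_mul_cancel₀ _ (ne_of_gt hvpos)]
          have h1 := hfoc _ hy₁B
          have h2 : (0 : ℝ) ≤ ⟪v, (-(R / ‖v‖)) • v - x₀⟫ := by
            have heq : ⟪φ' x₀, (-(R / ‖v‖)) • v - x₀⟫ - ⟪p, (-(R / ‖v‖)) • v - x₀⟫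
                = ⟪v, (-(R / ‖v‖)) • v - x₀⟫ := by
              rw [hv, inner_sub_left]
            linarith [heq.le, heq.ge]
          have h3 : ⟪v, x₀⟫ ≤ -(R * ‖v‖) := by
            rw [inner_sub_right, real_inner_smul_right,
              real_inner_self_eq_norm_sq] at h2
            have heq2 : -(R / ‖v‖) * ‖v‖ ^ 2 = -(R * ‖v‖) := by
              rw [sq]; field_simp
            linarith [heq2 ▸ h2]
          have h4 : -(R * ‖v‖) ≤ ⟪v, x₀⟫ := by
            have h5 := real_inner_le_norm (-v) x₀
            rw [inner_neg_left, norm_neg, hx₀R] at h5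
            linarith [h5]
          have hveq : ⟪v, x₀⟫ = -(R * ‖v‖) := le_antisymm h3 h4
          -- v = -(‖v‖/R) • x₀
          have hvx : ∃ lam : ℝ, 0 < lam ∧ v = -(lam • x₀) := by
            refine ⟨‖v‖ / R, div_pos hvpos hR, ?_⟩
            have hnz : ⟪v + (‖v‖ / R) • x₀, v + (‖v‖ / R) • x₀⟫ = 0 := by
              rw [inner_expand v x₀ (‖v‖ / R), real_inner_self_eq_norm_sq v,
                real_inner_self_eq_norm_sq x₀, hx₀R, hveq]
              field_simp
              ring
            have h6 : v + (‖v‖ / R) • x₀ = 0 :=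
              inner_self_eq_zero.mp hnz
            exact eq_neg_of_add_eq_zero_left h6
          obtain ⟨lam, hlampos, hvlam⟩ := hvx
          have hqeq : q = p + (-lam) • x₀ := by
            have hqpv : q = p + v := by rw [hv]; abel
            rw [hqpv, hvlam, neg_smul]
          -- key: ⟪q, x₀⟫ < 0
          have hxx : ⟪x₀, x₀⟫ = R ^ 2 := by
            rw [real_inner_self_eq_norm_sq, hx₀R]
          have hpp : ⟪p, p⟫ < R ^ 2 := by
            rw [real_inner_self_eq_norm_sq]
            nlinarith [norm_nonneg p]
          have hqq : ⟪q, q⟫ = R ^ 2 := by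
            rw [real_inner_self_eq_norm_sq, hqR]
          have hqx : ⟪q, x₀⟫ < 0 := by
            have hqxval : ⟪q, x₀⟫ = ⟪p, x₀⟫ - lam * R ^ 2 := by
              rw [hqeq, inner_add_left, real_inner_smul_left, hxx]; ring
            have hqqval : ⟪p, p⟫ - 2 * lam * ⟪p, x₀⟫ + lam ^ 2 * R ^ 2 = R ^ 2 := by
              have hexp : ⟪q, q⟫ = ⟪p, p⟫ + 2 * (-lam) * ⟪p, x₀⟫
                  + (-lam) ^ 2 * ⟪x₀, x₀⟫ := by
                rw [hqeq]; exact inner_expand p x₀ (-lam)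
              rw [hqq, hxx] at hexp
              nlinarith [hexp]
            rw [hqxval]
            nlinarith [mul_pos hlampos (mul_pos hR hR)]
          set A : ℝ := -⟪q, x₀⟫ with hA
          have hApos : 0 < A := by rw [hA]; linarith
          set y : Esp d := x₀ + (2 * A / R ^ 2) • q with hy
          have hR2 : (0 : ℝ) < R ^ 2 := by positivity
          have hyn2 : ‖y‖ ^ 2 = R ^ 2 := by
            have h0 : ⟪y, y⟫ = ⟪x₀, x₀⟫ + 2 * (2 * A / R ^ 2) * ⟪x₀, q⟫
                + (2 * A / R ^ 2) ^ 2 * ⟪q, q⟫ := by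
              rw [hy]; exact inner_expand x₀ q (2 * A / R ^ 2)
            have hx0q : ⟪x₀, q⟫ = -A := by
              rw [hA, real_inner_comm]; ring
            have h3 : ‖y‖ ^ 2 = ⟪y, y⟫ := (real_inner_self_eq_norm_sq y).symm
            rw [h3, h0, hxx, hqq, hx0q]
            field_simp
            ring
          have hynR : ‖y‖ = R := by
            have h1' : (‖y‖ - R) * (‖y‖ + R) = 0 := by nlinarith
            rcases mul_eq_zero.mp h1' with h | h
            · linarith
            · nlinarith [norm_nonneg y]
          have hyB : y ∈ closedBall (0 : Esp d) R := mem_closedBall_zero_iff.mpr hynR.le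
          have hφyR : ‖φ' y‖ = R := hsphere_norm y hynR
          have hyne : x₀ ≠ y := by
            intro h
            have h0 : (2 * A / R ^ 2) • q = 0 := by
              have := congrArg (fun w => w - x₀) (h.trans hy)
              simpa using this.symm
            rcases smul_eq_zero.mp h0 with h1' | h2'
            · have : (0 : ℝ) < 2 * A / R ^ 2 := by positivity
              linarith
            · rw [h2', norm_zero] at hqR; linarith
          have hm := mono hx₀B hyB hyne
          have hyx : y - x₀ = (2 * A / R ^ 2) • q := by rw [hy]; abel
          have hAeq : ⟪φ' y - q, y - x₀⟫
              = (2 * A / R ^ 2) * ⟪φ' y, q⟫ - (2 * A / R ^ 2) * R ^ 2 := by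
            rw [hyx, inner_sub_left,
              show ⟪φ' y, (2 * A / R ^ 2) • q⟫ = (2 * A / R ^ 2) * ⟪φ' y, q⟫ from
                real_inner_smul_right _ _ _,
              show ⟪q, (2 * A / R ^ 2) • q⟫ = (2 * A / R ^ 2) * ⟪q, q⟫ from
                real_inner_smul_right _ _ _,
              hqq]
          rw [hAeq] at hm
          have hcs : ⟪φ' y, q⟫ ≤ R ^ 2 := by
            calc ⟪φ' y, q⟫ ≤ ‖φ' y‖ * ‖q‖ := real_inner_le_norm _ _
              _ = R ^ 2 := by rw [hφyR, hqR]; ring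
          have hposc : (0 : ℝ) < 2 * A / R ^ 2 := by positivity
          nlinarith [mul_nonneg hposc.le (sub_nonneg.mpr hcs), hm]
      have hcompact : IsCompact (φ' '' closedBall (0 : Esp d) R) :=
        (isCompact_closedBall (0 : Esp d) R).image_of_continuousOn hφ'cont
      calc closedBall (0 : Esp d) R = closure (ball (0 : Esp d) R) :=
            (closure_ball (0 : Esp d) hR.ne').symm
        _ ⊆ φ' '' closedBall (0 : Esp d) R :=
            hcompact.isClosed.closure_subset_iff.mpr hball

end
end

section
/- Let X be a separable metric space, x* ∈ X, and f₁, f₂, … i.i.d. random elements of C_b(X) with f₁(x*) = 0 a.s. and E sup_{x∈X}|f₁(x)| < ∞. Let X_n be random elements of X with X_n → x* a.s. Then (1/n) Σ_{i=1}^n f_i(X_n) → 0 a.s. -/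
open MeasureTheory Filter BoundedContinuousFunction

noncomputable section

section Aux

variable {X : Type*} [MetricSpace X]

/-- Modulus: the sup of `|f|` over the closed ball of radius `δ` around `xstar`. -/
def gmod (xstar : X) (δ : ℝ) (f : X →ᵇ ℝ) : ℝ :=
  ⨆ x : Metric.closedBall xstar δ, |f x|

lemma gmod_nonneg (xstar : X) (δ : ℝ) (f : X →ᵇ ℝ) : 0 ≤ gmod xstar δ f :=
  Real.iSup_nonneg fun x => abs_nonneg _

lemma gmod_le_norm (xstar : X) (δ : ℝ) (f : X →ᵇ ℝ) : gmod xstar δ f ≤ ‖f‖ :=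
  Real.iSup_le (fun x => f.norm_coe_le_norm x) (norm_nonneg f)

lemma bddAbove_gmod (xstar : X) (δ : ℝ) (f : X →ᵇ ℝ) :
    BddAbove (Set.range fun x : Metric.closedBall xstar δ => |f x|) := by
  refine ⟨‖f‖, ?_⟩
  rintro y ⟨x, rfl⟩
  exact f.norm_coe_le_norm x

lemma le_gmod (xstar : X) (δ : ℝ) (f : X →ᵇ ℝ) {x : X}
    (hx : x ∈ Metric.closedBall xstar δ) : |f x| ≤ gmod xstar δ f :=
  le_ciSup (bddAbove_gmod xstar δ f) (⟨x, hx⟩ : Metric.closedBall xstar δ)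

lemma gmod_le_add (xstar : X) (δ : ℝ) (f h : X →ᵇ ℝ) :
    gmod xstar δ f ≤ gmod xstar δ h + dist f h := by
  refine Real.iSup_le (fun x => ?_)
    (add_nonneg (gmod_nonneg xstar δ h) dist_nonneg)
  have h1 : |f x| ≤ |h x| + |f x - h x| := by
    have := abs_sub_abs_le_abs_sub (f x) (h x)
    linarith [abs_nonneg (f x - h x)]
  have h2 : |f x - h x| ≤ dist f h := by
    have := BoundedContinuousFunction.dist_coe_le_dist (f := f) (g := h) (x : X)
    rwa [Real.dist_eq] at this
  have h3 : |h x| ≤ gmod xstar δ h := le_gmod xstar δ h x.2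
  linarith

lemma gmod_lipschitz (xstar : X) (δ : ℝ) : LipschitzWith 1 (gmod xstar δ) := by
  refine LipschitzWith.of_dist_le_mul fun f h => ?_
  simp only [NNReal.coe_one, one_mul]
  rw [Real.dist_eq, abs_sub_le_iff]
  constructor
  · linarith [gmod_le_add xstar δ f h]
  · have := gmod_le_add xstar δ h f
    rw [dist_comm] at this
    linarith

lemma gmod_tendsto (xstar : X) (f : X →ᵇ ℝ) :
    Tendsto (fun k : ℕ => gmod xstar (1 / (k + 1)) f) atTop (nhds |f xstar|) := by
  rw [Metric.tendsto_atTop]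
  intro ε hε
  have hcont : ContinuousAt (fun x => f x) xstar := f.continuous.continuousAt
  rw [Metric.continuousAt_iff] at hcont
  obtain ⟨δ₀, hδ₀, hc⟩ := hcont (ε / 2) (by linarith)
  obtain ⟨N, hN⟩ := exists_nat_one_div_lt hδ₀
  refine ⟨N, fun k hk => ?_⟩
  have hkpos : (0 : ℝ) < 1 / (k + 1) := by positivity
  have hkle : (1 : ℝ) / (k + 1) < δ₀ := by
    calc (1 : ℝ) / (k + 1) ≤ 1 / (N + 1) := by
          apply div_le_div_of_nonneg_left (by norm_num) (by positivity)
          exact_mod_cast Nat.add_le_add_right hk 1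
      _ < δ₀ := hN
  have hub : gmod xstar (1 / (k + 1)) f ≤ |f xstar| + ε / 2 := by
    refine Real.iSup_le (fun x => ?_) (by positivity)
    have hx : dist (x : X) xstar < δ₀ :=
      lt_of_le_of_lt (Metric.mem_closedBall.1 x.2) hkle
    have := hc hx
    rw [Real.dist_eq] at this
    have h1 : |f x| ≤ |f xstar| + |f x - f xstar| := by
      have := abs_sub_abs_le_abs_sub (f (x : X)) (f xstar)
      linarith [abs_nonneg (f (x : X) - f xstar)]
    linarith
  have hlb : |f xstar| ≤ gmod xstar (1 / (k + 1)) f :=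
    le_gmod xstar _ f (by rw [Metric.mem_closedBall, dist_self]; positivity)
  rw [Real.dist_eq, abs_sub_lt_iff]
  constructor <;> linarith

end Aux

/-- if `f₁, f₂, …` are i.i.d. random bounded continuous functions
on a separable metric space `X` with `f₁(x*) = 0` a.s. and `E sup |f₁| < ∞`, and
`X_n → x*` a.s., then `(1/n) Σ_{i=1}^n f_i(X_n) → 0` a.s. -/
theorem lln_random_functions
    {X : Type*} [MetricSpace X] [TopologicalSpace.SeparableSpace X]
    [MeasurableSpace X] [BorelSpace X]
    {Ω' : Type*} [MeasurableSpace Ω'] (μ : Measure Ω') [IsProbabilityMeasure μ]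
    [MeasurableSpace (X →ᵇ ℝ)] [BorelSpace (X →ᵇ ℝ)]
    (xstar : X)
    (F : ℕ → Ω' → (X →ᵇ ℝ)) (hFmeas : ∀ n, Measurable (F n))
    (hindep : ProbabilityTheory.iIndepFun
      (m := fun _ : ℕ => (inferInstance : MeasurableSpace (X →ᵇ ℝ))) F μ)
    (hident : ∀ n, μ.map (F n) = μ.map (F 0))
    (hzero : ∀ᵐ ω ∂μ, F 0 ω xstar = 0)
    (hint : Integrable (fun ω => ‖F 0 ω‖) μ)
    (Xn : ℕ → Ω' → X) (hXmeas : ∀ n, Measurable (Xn n))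
    (hXconv : ∀ᵐ ω ∂μ, Tendsto (fun n => Xn n ω) atTop (nhds xstar)) :
    ∀ᵐ ω ∂μ, Tendsto
      (fun n : ℕ => (1 / (n : ℝ)) * ∑ i ∈ Finset.range n, (F i ω) (Xn n ω))
      atTop (nhds 0) := by
  -- the moduli at radii 1/(k+1)
  set δk : ℕ → ℝ := fun k => 1 / (k + 1) with hδk
  set Y : ℕ → ℕ → Ω' → ℝ := fun k i ω => gmod xstar (δk k) (F i ω) with hY
  have hgmeas : ∀ k, Measurable (gmod xstar (δk k)) :=
    fun k => (gmod_lipschitz xstar (δk k)).continuous.measurable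
  have hYmeas : ∀ k i, Measurable (Y k i) :=
    fun k i => (hgmeas k).comp (hFmeas i)
  have hYint : ∀ k, Integrable (Y k 0) μ := by
    intro k
    refine hint.mono ((hYmeas k 0).aestronglyMeasurable) ?_
    filter_upwards with ω
    rw [Real.norm_eq_abs, Real.norm_eq_abs,
      abs_of_nonneg (gmod_nonneg xstar (δk k) (F 0 ω)), abs_of_nonneg (norm_nonneg _)]
    exact gmod_le_norm xstar (δk k) (F 0 ω)
  have hidentF : ∀ i, ProbabilityTheory.IdentDistrib (F i) (F 0) μ μ :=
    fun i => ⟨(hFmeas i).aemeasurable, (hFmeas 0).aemeasurable, hident i⟩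
  have hslln : ∀ k, ∀ᵐ ω ∂μ,
      Tendsto (fun n : ℕ => (∑ i ∈ Finset.range n, Y k i ω) / n) atTop
        (nhds ((∫ ω, Y k 0 ω ∂μ))) := by
    intro k
    refine ProbabilityTheory.strong_law_ae_real (Y k) (hYint k) ?_ ?_
    · intro i j hij
      exact (hindep.indepFun hij).comp (hgmeas k) (hgmeas k)
    · intro i
      exact (hidentF i).comp (hgmeas k)
  -- the means tend to 0 (dominated convergence)
  have hM : Tendsto (fun k => (∫ ω, Y k 0 ω ∂μ)) atTop (nhds 0) := by
    have h0 : (0 : ℝ) = ∫ _ω, (0 : ℝ) ∂μ := by simp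
    rw [h0]
    refine tendsto_integral_of_dominated_convergence (fun ω => ‖F 0 ω‖)
      (fun k => (hYmeas k 0).aestronglyMeasurable) hint ?_ ?_
    · intro k
      filter_upwards with ω
      rw [Real.norm_eq_abs, abs_of_nonneg (gmod_nonneg xstar (δk k) (F 0 ω))]
      exact gmod_le_norm xstar (δk k) (F 0 ω)
    · filter_upwards [hzero] with ω hω
      have := gmod_tendsto xstar (F 0 ω)
      rw [hω, abs_zero] at this
      exact this
  have hMnonneg : ∀ k, 0 ≤ (∫ ω, Y k 0 ω ∂μ) :=
    fun k => integral_nonneg fun ω => gmod_nonneg _ _ _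
  -- main argument
  filter_upwards [hXconv, ae_all_iff.2 hslln] with ω hX hsl
  rw [NormedAddCommGroup.tendsto_nhds_zero]
  intro ε hε
  obtain ⟨k, hk⟩ : ∃ k, (∫ ω, Y k 0 ω ∂μ) < ε / 2 := by
    rcases (Metric.tendsto_atTop.1 hM (ε / 2) (by linarith)) with ⟨k, hk⟩
    refine ⟨k, ?_⟩
    have := hk k le_rfl
    rw [Real.dist_eq, sub_zero, abs_of_nonneg (hMnonneg k)] at this
    exact this
  have hδkpos : 0 < δk k := by rw [hδk]; positivity
  have h1 : ∀ᶠ n in atTop, (∑ i ∈ Finset.range n, Y k i ω) / n < ε :=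
    (tendsto_order.1 (hsl k)).2 ε (by linarith)
  have h2 : ∀ᶠ n in atTop, dist (Xn n ω) xstar < δk k := by
    obtain ⟨N, hN⟩ := Metric.tendsto_atTop.1 hX (δk k) hδkpos
    exact eventually_atTop.2 ⟨N, hN⟩
  filter_upwards [h1, h2] with n hn hd
  rw [Real.norm_eq_abs]
  have hball : Xn n ω ∈ Metric.closedBall xstar (δk k) :=
    Metric.mem_closedBall.2 hd.le
  have hbd : |∑ i ∈ Finset.range n, (F i ω) (Xn n ω)| ≤ ∑ i ∈ Finset.range n, Y k i ω := by
    refine (Finset.abs_sum_le_sum_abs _ _).trans (Finset.sum_le_sum fun i _ => ?_)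
    exact le_gmod xstar (δk k) (F i ω) hball
  calc |1 / (n : ℝ) * ∑ i ∈ Finset.range n, (F i ω) (Xn n ω)|
      = (1 / (n : ℝ)) * |∑ i ∈ Finset.range n, (F i ω) (Xn n ω)| := by
        rw [abs_mul, abs_of_nonneg (by positivity : (0:ℝ) ≤ 1 / (n:ℝ))]
    _ ≤ (1 / (n : ℝ)) * ∑ i ∈ Finset.range n, Y k i ω := by
        apply mul_le_mul_of_nonneg_left hbd (by positivity)
    _ = (∑ i ∈ Finset.range n, Y k i ω) / n := by ring
    _ < ε := hn

end
end

section
/- Let H be a separable Hilbert space, {A_n} a sequence of random bounded operators on H converging to a fixed bounded operator A in the strong operator topology almost surely and bounded in probability (for each ε > 0 there is M_ε with P(‖A_n‖_op > M_ε) ≤ ε for all n). Let X_n be H-valued random variables converging in distribution to X. Then A_n X_n converges in distribution to AX. -/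
open MeasureTheory Filter BoundedContinuousFunction Topology
open scoped ENNReal NNReal

noncomputable section

lemma measurable_clm_apply_comp {O H : Type*} [MeasurableSpace O]
    [NormedAddCommGroup H] [NormedSpace Real H]
    [TopologicalSpace.SeparableSpace H] [MeasurableSpace H] [BorelSpace H]
    (L : O -> (H →L[ℝ] H)) (hL : ∀ u : H, Measurable fun w => L w u)
    (g : O -> H) (hg : Measurable g) :
    Measurable fun w => L w (g w) := by
  haveI : SecondCountableTopology H := UniformSpace.secondCountable_of_separable H
  set s : Nat -> SimpleFunc O H := SimpleFunc.approxOn g hg Set.univ 0 (Set.mem_univ 0) with hs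
  have hmeas : ∀ k, Measurable fun w => L w (s k w) := fun k =>
    (s k).measurable_bind (fun u w => L w u) hL
  refine measurable_of_tendsto_metrizable hmeas ?_
  rw [tendsto_pi_nhds]
  intro w
  have h1 : Tendsto (fun k => s k w) atTop (nhds (g w)) :=
    SimpleFunc.tendsto_approxOn hg (Set.mem_univ 0) (by simp)
  exact ((L w).continuous.tendsto (g w)).comp h1

/-- A weakly convergent sequence of probability measures on a complete separable metric
space is uniformly tight. -/
lemma tight_of_tendsto {H : Type*} [MetricSpace H] [CompleteSpace H]
    [TopologicalSpace.SeparableSpace H] [Nonempty H]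
    [MeasurableSpace H] [OpensMeasurableSpace H]
    (νs : ℕ → ProbabilityMeasure H) (ν : ProbabilityMeasure H)
    (h : Tendsto νs atTop (𝓝 ν)) {ε : ℝ≥0∞} (hε : 0 < ε) :
    ∃ K : Set H, IsCompact K ∧ ∀ n, (νs n : Measure H) Kᶜ ≤ ε := by
  -- reduce to finite ε
  obtain ⟨ε', hε'0, hε'top, hε'le⟩ : ∃ ε' : ℝ≥0∞, 0 < ε' ∧ ε' ≠ ⊤ ∧ ε' ≤ ε := by
    rcases eq_top_or_lt_top ε with h' | h'
    · exact ⟨1, one_pos, ENNReal.one_ne_top, h' ▸ le_top⟩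
    · exact ⟨ε, hε, h'.ne, le_rfl⟩
  suffices h' : ∃ K : Set H, IsCompact K ∧ ∀ n, (νs n : Measure H) Kᶜ ≤ ε' by
    obtain ⟨K, hK, hKle⟩ := h'
    exact ⟨K, hK, fun n => (hKle n).trans hε'le⟩
  clear hε'le hε
  set d : ℕ → H := TopologicalSpace.denseSeq H with hd
  have hdd : DenseRange d := TopologicalSpace.denseRange_denseSeq H
  -- the basic open sets
  set G : ℕ → ℕ → Set H := fun k m => ⋃ i ∈ Finset.range (m + 1),
    Metric.ball (d i) (1 / (k + 1)) with hG
  have hGopen : ∀ k m, IsOpen (G k m) := fun k m =>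
    isOpen_biUnion fun i _ => Metric.isOpen_ball
  have hGmono : ∀ k, Monotone (G k) := by
    intro k m m' hmm'
    refine Set.iUnion₂_subset fun i hi =>
      Set.subset_biUnion_of_mem (u := fun i => Metric.ball (d i) (1 / (k + 1)))
      (Finset.mem_range.mpr (lt_of_lt_of_le (Finset.mem_range.mp hi) (by omega)))
  have hGunion : ∀ k, (⋃ m, G k m) = Set.univ := by
    intro k
    ext x
    simp only [Set.mem_iUnion, Set.mem_univ, iff_true]
    have : (0 : ℝ) < 1 / (k + 1) := by positivity
    obtain ⟨i, hi⟩ := Metric.denseRange_iff.mp hdd x (1 / (k + 1)) this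
    exact ⟨i, Set.mem_biUnion (Finset.self_mem_range_succ i) (by simpa [dist_comm] using hi)⟩
  -- each probability measure eventually puts mass ≥ 1 - δ on G k m
  have key_single : ∀ (ρ : ProbabilityMeasure H) (k : ℕ) {δ : ℝ≥0∞}, 0 < δ →
      ∀ᶠ m in atTop, (ρ : Measure H) (G k m)ᶜ < δ := by
    intro ρ k δ hδ
    have hc : Tendsto (fun m => (ρ : Measure H) (G k m)ᶜ) atTop (𝓝 0) := by
      have := tendsto_measure_iInter_atTop (μ := (ρ : Measure H))
        (s := fun m => (G k m)ᶜ)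
        (fun m => ((hGopen k m).isClosed_compl.measurableSet).nullMeasurableSet)
        (fun m m' hmm' => Set.compl_subset_compl.mpr (hGmono k hmm'))
        ⟨0, measure_ne_top _ _⟩
      have h0 : (⋂ m, (G k m)ᶜ) = ∅ := by
        rw [← Set.compl_iUnion, hGunion k, Set.compl_univ]
      simpa [h0, Function.comp_def] using this
    exact hc.eventually_lt_const hδ
  -- the crucial uniform choice of m for each k
  have key : ∀ k : ℕ, ∃ m : ℕ, ∀ n, (νs n : Measure H) (G k m)ᶜ ≤ ε' * 2⁻¹ ^ (k + 1) := by
    intro k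
    set δ : ℝ≥0∞ := ε' * 2⁻¹ ^ (k + 1) with hδdef
    have hδ : 0 < δ := by
      exact ENNReal.mul_pos hε'0.ne'
        (ENNReal.pow_pos (ENNReal.inv_pos.mpr ENNReal.ofNat_ne_top) _).ne'
    -- choose m₀ for the limit measure
    obtain ⟨m₀, hm₀⟩ := (key_single ν k hδ).exists
    -- portmanteau: limsup of closed-set measures
    have hlim : (atTop.limsup fun n => (νs n : Measure H) (G k m₀)ᶜ) ≤
        (ν : Measure H) (G k m₀)ᶜ :=
      ProbabilityMeasure.limsup_measure_closed_le_of_tendsto h (hGopen k m₀).isClosed_compl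
    have hev : ∀ᶠ n in atTop, (νs n : Measure H) (G k m₀)ᶜ < δ :=
      eventually_lt_of_limsup_lt (lt_of_le_of_lt hlim hm₀)
    obtain ⟨N, hN⟩ := hev.exists_forall_of_atTop
    -- handle the finitely many n < N
    have hfin : ∀ n, ∃ m, (νs n : Measure H) (G k m)ᶜ < δ := fun n =>
      ((key_single (νs n) k hδ)).exists
    choose mf hmf using hfin
    set m : ℕ := max m₀ ((Finset.range N).sup mf) with hm
    refine ⟨m, fun n => ?_⟩
    have mono : ∀ m₁ m₂, m₁ ≤ m₂ → (νs n : Measure H) (G k m₂)ᶜ ≤ (νs n : Measure H) (G k m₁)ᶜ :=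
      fun m₁ m₂ h12 => measure_mono (Set.compl_subset_compl.mpr (hGmono k h12))
    rcases lt_or_ge n N with hn | hn
    · exact le_of_lt (lt_of_le_of_lt
        (mono _ _ (le_max_of_le_right (Finset.le_sup (Finset.mem_range.mpr hn)))) (hmf n))
    · exact le_of_lt (lt_of_le_of_lt (mono _ _ (le_max_left _ _)) (hN n hn))
  choose m hm using key
  refine ⟨closure (⋂ k, G k (m k)), ?_, ?_⟩
  · refine TotallyBounded.isCompact_of_isClosed (TotallyBounded.closure ?_) isClosed_closure
    rw [Metric.totallyBounded_iff]
    intro r hr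
    obtain ⟨k, hk⟩ := exists_nat_gt (1 / r)
    refine ⟨d '' Set.Iio (m k + 1), (Set.finite_Iio _).image d, ?_⟩
    have h1k : (1 : ℝ) / (k + 1) ≤ r := by
      rw [div_le_iff₀ (by positivity)]
      rw [div_lt_iff₀ hr] at hk
      nlinarith
    intro x hx
    have hx' : x ∈ G k (m k) := Set.mem_iInter.mp hx k
    simp only [G, Set.mem_iUnion] at hx'
    obtain ⟨i, hi, hxi⟩ := hx'
    refine Set.mem_biUnion (Set.mem_image_of_mem d ?_) (Metric.ball_subset_ball h1k hxi)
    exact Finset.mem_range.mp hi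
  · intro n
    calc (νs n : Measure H) (closure (⋂ k, G k (m k)))ᶜ
        ≤ (νs n : Measure H) (⋃ k, (G k (m k))ᶜ) := by
          apply measure_mono
          rw [← Set.compl_iInter]
          exact Set.compl_subset_compl.mpr subset_closure
      _ ≤ ∑' k, (νs n : Measure H) (G k (m k))ᶜ := measure_iUnion_le _
      _ ≤ ∑' k, ε' * 2⁻¹ ^ (k + 1) := ENNReal.tsum_le_tsum fun k => hm k n
      _ = ε' := by
          rw [ENNReal.tsum_mul_left]
          have : ∑' k : ℕ, (2 : ℝ≥0∞)⁻¹ ^ (k + 1) = 2⁻¹ * ∑' k : ℕ, 2⁻¹ ^ k := by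
            rw [← ENNReal.tsum_mul_left]
            simp [pow_succ, mul_comm]
          rw [this, ENNReal.tsum_geometric, ENNReal.one_sub_inv_two,
            inv_inv]
          have h2 : (2 : ℝ≥0∞)⁻¹ * 2 = 1 := ENNReal.inv_mul_cancel (by norm_num) (by norm_num)
          rw [h2, mul_one]


/-- Slutsky's theorem in a separable Hilbert space. If random
bounded operators `A_n` converge a.s. to `A` in the strong operator topology and are
bounded in probability, and `X_n → X` in distribution, then `A_n X_n → A X` in
distribution. -/
theorem slutsky_hilbert
    {H : Type*} [NormedAddCommGroup H] [InnerProductSpace ℝ H] [CompleteSpace H]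
    [TopologicalSpace.SeparableSpace H] [MeasurableSpace H] [BorelSpace H]
    {Ω' : Type*} [MeasurableSpace Ω'] (μ : Measure Ω') [IsProbabilityMeasure μ]
    (An : ℕ → Ω' → (H →L[ℝ] H)) (A : H →L[ℝ] H)
    (hAmeas : ∀ n (u : H), Measurable (fun ω => An n ω u))
    (hSOT : ∀ᵐ ω ∂μ, ∀ u : H, Tendsto (fun n => An n ω u) atTop (nhds (A u)))
    (hbdd : ∀ ε : ℝ, 0 < ε → ∃ M : ℝ, ∀ n,
      μ {ω | M < ‖An n ω‖} ≤ ENNReal.ofReal ε)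
    (Xn : ℕ → Ω' → H) (hXnmeas : ∀ n, Measurable (Xn n))
    (X : Ω' → H) (hXmeas : Measurable X)
    (hconv : ∀ f : H →ᵇ ℝ,
      Tendsto (fun n => ∫ ω, f (Xn n ω) ∂μ) atTop (nhds (∫ ω, f (X ω) ∂μ))) :
    ∀ f : H →ᵇ ℝ,
      Tendsto (fun n => ∫ ω, f (An n ω (Xn n ω)) ∂μ) atTop
        (nhds (∫ ω, f (A (X ω)) ∂μ)) := by
  haveI : Nonempty H := ⟨0⟩
  have hYmeas : ∀ n, Measurable fun ω => An n ω (Xn n ω) := fun n =>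
    measurable_clm_apply_comp (An n) (hAmeas n) (Xn n) (hXnmeas n)
  -- pushforward measures and weak convergence
  set νs : ℕ → ProbabilityMeasure H := fun n =>
    ⟨μ.map (Xn n), Measure.isProbabilityMeasure_map (hXnmeas n).aemeasurable⟩ with hνs
  set ν : ProbabilityMeasure H := ⟨μ.map X, Measure.isProbabilityMeasure_map hXmeas.aemeasurable⟩ with hν
  have hw : Tendsto νs atTop (𝓝 ν) := by
    rw [ProbabilityMeasure.tendsto_iff_forall_integral_tendsto]
    intro g
    have h1 : ∀ n, ∫ x, g x ∂(νs n : Measure H) = ∫ ω, g (Xn n ω) ∂μ := fun n =>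
      integral_map (hXnmeas n).aemeasurable g.continuous.aestronglyMeasurable
    have h2 : ∫ x, g x ∂(ν : Measure H) = ∫ ω, g (X ω) ∂μ :=
      integral_map hXmeas.aemeasurable g.continuous.aestronglyMeasurable
    simp only [h1, h2]
    exact hconv g
  intro f
  set C := ‖f‖ with hC
  have hC0 : (0:ℝ) ≤ C := norm_nonneg f
  -- integrability of bounded continuous compositions
  have hint : ∀ (g : Ω' → H), Measurable g → Integrable (fun ω => f (g ω)) μ := by
    intro g hg
    refine Integrable.mono' (integrable_const C)
      ((f.continuous.measurable.comp hg).aestronglyMeasurable) ?_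
    exact Eventually.of_forall fun ω => f.norm_coe_le_norm _
  -- convergence of the auxiliary term
  have h2 : Tendsto (fun n => ∫ ω, f (A (Xn n ω)) ∂μ) atTop
      (𝓝 (∫ ω, f (A (X ω)) ∂μ)) := by
    have := hconv (f.compContinuous ⟨(A : H → H), A.continuous⟩)
    simpa using this
  -- the difference tends to zero
  have hdiff : Tendsto
      (fun n => (∫ ω, f (An n ω (Xn n ω)) ∂μ) - ∫ ω, f (A (Xn n ω)) ∂μ)
      atTop (𝓝 0) := by
    rw [NormedAddCommGroup.tendsto_nhds_zero]
    intro ε hε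
    set η : ℝ := ε / (20 * (C + 1)) with hηdef
    have hη0 : 0 < η := by positivity
    obtain ⟨M₀, hM₀⟩ := hbdd η hη0
    set M : ℝ := max M₀ 0 with hMdef
    have hMnn : (0:ℝ) ≤ M := le_max_right _ _
    have hM : ∀ n, μ {ω | M < ‖An n ω‖} ≤ ENNReal.ofReal η := by
      intro n
      refine le_trans (measure_mono ?_) (hM₀ n)
      intro ω hω
      simp only [Set.mem_setOf_eq] at hω ⊢
      exact lt_of_le_of_lt (le_max_left _ _) hω
    -- tightness
    obtain ⟨K, hKcomp, hKle⟩ := tight_of_tendsto νs ν hw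
      (ε := ENNReal.ofReal η) (ENNReal.ofReal_pos.mpr hη0)
    have hKm : ∀ n, μ (Xn n ⁻¹' Kᶜ) ≤ ENNReal.ofReal η := by
      intro n
      have hmap : (νs n : Measure H) Kᶜ = μ (Xn n ⁻¹' Kᶜ) :=
        Measure.map_apply (hXnmeas n) hKcomp.isClosed.measurableSet.compl
      rw [← hmap]; exact hKle n
    -- uniform continuity near A '' K
    set K' : Set H := A '' K with hK'
    have hK'comp : IsCompact K' := hKcomp.image A.continuous
    have hε2 : (0:ℝ) < ε/2 := by positivity
    obtain ⟨δ, hδ0, hδ⟩ : ∃ δ > 0, ∀ x y : H, dist x y < δ → x ∈ K' →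
        dist (f x) (f y) < ε/2 := by
      have hr : {p : ℝ × ℝ | dist p.1 p.2 < ε/2} ∈ uniformity ℝ :=
        Metric.dist_mem_uniformity hε2
      have hu := hK'comp.uniformContinuousAt_of_continuousAt f
        (fun a _ => f.continuous.continuousAt) hr
      rw [Metric.mem_uniformity_dist] at hu
      obtain ⟨δ, hδ0, hδ⟩ := hu
      exact ⟨δ, hδ0, fun x y hxy hx => hδ hxy hx⟩
    -- finite net in K
    have hr0 : (0:ℝ) < δ / (2 * (M + ‖A‖ + 1)) := by positivity
    set r : ℝ := δ / (2 * (M + ‖A‖ + 1)) with hrdef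
    obtain ⟨t, htK, htfin, htcover⟩ := hKcomp.finite_cover_balls hr0
    set T : Finset H := htfin.toFinset with hT
    -- the net sum functions
    set g : ℕ → Ω' → ℝ := fun n ω => ∑ x ∈ T, ‖An n ω x - A x‖ with hg
    have hgmeas : ∀ n, Measurable (g n) := by
      intro n
      apply Finset.measurable_sum
      exact fun x _ => ((hAmeas n x).sub measurable_const).norm
    have hgae : ∀ᵐ ω ∂μ, Tendsto (fun n => g n ω) atTop (𝓝 0) := by
      filter_upwards [hSOT] with ω hω
      have : Tendsto (fun n => ∑ x ∈ T, ‖An n ω x - A x‖) atTop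
          (𝓝 (∑ x ∈ T, (0:ℝ))) := by
        apply tendsto_finset_sum
        intro x _
        have h0 : Tendsto (fun n => An n ω x - A x) atTop (𝓝 0) :=
          tendsto_sub_nhds_zero_iff.mpr (hω x)
        simpa using h0.norm
      simpa using this
    have hTIM : TendstoInMeasure μ g atTop (fun _ => (0:ℝ)) :=
      tendstoInMeasure_of_tendsto_ae (fun n => (hgmeas n).aestronglyMeasurable) hgae
    have h3 : Tendsto (fun n => μ {ω | δ/2 ≤ dist (g n ω) 0}) atTop (𝓝 0) :=
      tendstoInMeasure_iff_dist.mp hTIM (δ/2) (by positivity)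
    have hev3 : ∀ᶠ n in atTop, μ {ω | δ/2 ≤ dist (g n ω) 0} ≤ ENNReal.ofReal η :=
      (h3.eventually_lt_const (ENNReal.ofReal_pos.mpr hη0)).mono fun n hn => hn.le
    -- key inclusion
    have hincl : ∀ n, {ω | δ ≤ dist (An n ω (Xn n ω)) (A (Xn n ω))} ⊆
        {ω | M < ‖An n ω‖} ∪ (Xn n ⁻¹' Kᶜ) ∪ {ω | δ/2 ≤ dist (g n ω) 0} := by
      intro n ω hω
      simp only [Set.mem_setOf_eq] at hω
      by_contra hcon
      simp only [Set.mem_union, Set.mem_setOf_eq, Set.mem_preimage, Set.mem_compl_iff,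
        not_or, not_lt, not_le] at hcon
      obtain ⟨⟨hA1, hA2⟩, hA3⟩ := hcon
      rw [not_not] at hA2
      -- find a net point
      obtain ⟨x, hxT, hxball⟩ : ∃ x ∈ T, Xn n ω ∈ Metric.ball x r := by
        have hc := htcover hA2
        simp only [Set.mem_iUnion] at hc
        obtain ⟨x, hx, hball⟩ := hc
        exact ⟨x, (Set.Finite.mem_toFinset htfin).mpr hx, hball⟩
      have hdistx : ‖Xn n ω - x‖ ≤ r := by
        rw [← dist_eq_norm]
        exact (Metric.mem_ball.mp hxball).le
      have hb1 : ‖An n ω (Xn n ω) - An n ω x‖ ≤ M * r := by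
        rw [← map_sub]
        calc ‖An n ω (Xn n ω - x)‖ ≤ ‖An n ω‖ * ‖Xn n ω - x‖ :=
              (An n ω).le_opNorm _
          _ ≤ M * r := mul_le_mul hA1 hdistx (norm_nonneg _) hMnn
      have hb3 : ‖A x - A (Xn n ω)‖ ≤ ‖A‖ * r := by
        rw [← map_sub]
        calc ‖A (x - Xn n ω)‖ ≤ ‖A‖ * ‖x - Xn n ω‖ := A.le_opNorm _
          _ ≤ ‖A‖ * r := by
              rw [norm_sub_rev]
              exact mul_le_mul_of_nonneg_left hdistx (norm_nonneg A)
      have hb2 : ‖An n ω x - A x‖ ≤ g n ω :=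
        Finset.single_le_sum (f := fun y => ‖An n ω y - A y‖)
          (fun y _ => norm_nonneg _) hxT
      have hgω : g n ω < δ/2 := by
        have habs : dist (g n ω) 0 = g n ω := by
          rw [Real.dist_eq, sub_zero, abs_of_nonneg]
          exact Finset.sum_nonneg fun y _ => norm_nonneg _
        rw [← habs]; exact hA3
      have hMA : (M + ‖A‖) * r ≤ δ/2 := by
        have h1 : r * (2*(M+‖A‖+1)) = δ := by
          rw [hrdef]; field_simp
        nlinarith [norm_nonneg A, hr0]
      have htri : dist (An n ω (Xn n ω)) (A (Xn n ω)) ≤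
          ‖An n ω (Xn n ω) - An n ω x‖ + ‖An n ω x - A x‖ + ‖A x - A (Xn n ω)‖ := by
        rw [dist_eq_norm]
        have hsplit : An n ω (Xn n ω) - A (Xn n ω) =
            (An n ω (Xn n ω) - An n ω x) + (An n ω x - A x) + (A x - A (Xn n ω)) := by
          abel
        rw [hsplit]
        refine (norm_add_le _ _).trans ?_
        gcongr
        exact norm_add_le _ _
      nlinarith [hω, htri, hb1, hb2, hb3, hgω, hMA]
    -- now the eventual bound
    filter_upwards [hev3] with n hn
    set E : Set Ω' := (Xn n ⁻¹' Kᶜ) ∪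
      {ω | δ ≤ dist (An n ω (Xn n ω)) (A (Xn n ω))} with hE
    have hEmeas : MeasurableSet E := by
      apply MeasurableSet.union
      · exact hXnmeas n hKcomp.isClosed.measurableSet.compl
      · exact measurableSet_le measurable_const
          ((hYmeas n).dist (A.continuous.measurable.comp (hXnmeas n)))
    have hEbound : μ E ≤ 4 * ENNReal.ofReal η := by
      calc μ E ≤ μ (Xn n ⁻¹' Kᶜ) + μ {ω | δ ≤ dist (An n ω (Xn n ω)) (A (Xn n ω))} :=
            measure_union_le _ _
        _ ≤ ENNReal.ofReal η + μ ({ω | M < ‖An n ω‖} ∪ (Xn n ⁻¹' Kᶜ) ∪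
              {ω | δ/2 ≤ dist (g n ω) 0}) :=
            add_le_add (hKm n) (measure_mono (hincl n))
        _ ≤ ENNReal.ofReal η + (μ ({ω | M < ‖An n ω‖} ∪ (Xn n ⁻¹' Kᶜ)) +
              μ {ω | δ/2 ≤ dist (g n ω) 0}) :=
            add_le_add le_rfl (measure_union_le _ _)
        _ ≤ ENNReal.ofReal η + ((μ {ω | M < ‖An n ω‖} + μ (Xn n ⁻¹' Kᶜ)) +
              μ {ω | δ/2 ≤ dist (g n ω) 0}) :=
            add_le_add le_rfl (add_le_add (measure_union_le _ _) le_rfl)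
        _ ≤ ENNReal.ofReal η + ((ENNReal.ofReal η + ENNReal.ofReal η) + ENNReal.ofReal η) :=
            add_le_add le_rfl (add_le_add (add_le_add (hM n) (hKm n)) hn)
        _ = 4 * ENNReal.ofReal η := by ring
    have hEreal : (μ E).toReal ≤ 4 * η := by
      have h4 : (4 : ℝ≥0∞) * ENNReal.ofReal η ≠ ⊤ :=
        ENNReal.mul_ne_top (by norm_num) ENNReal.ofReal_ne_top
      calc (μ E).toReal ≤ ((4:ℝ≥0∞) * ENNReal.ofReal η).toReal :=
            ENNReal.toReal_mono h4 hEbound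
        _ = 4 * η := by
            rw [ENNReal.toReal_mul, ENNReal.toReal_ofReal hη0.le]
            norm_num
    -- pointwise bound
    have hpt : ∀ ω, |f (An n ω (Xn n ω)) - f (A (Xn n ω))| ≤
        ε/2 + E.indicator (fun _ => 2*C) ω := by
      intro ω
      by_cases hωE : ω ∈ E
      · rw [Set.indicator_of_mem hωE]
        have hh1 : |(f (An n ω (Xn n ω)) : ℝ)| ≤ C := f.norm_coe_le_norm _
        have hh2 : |(f (A (Xn n ω)) : ℝ)| ≤ C := f.norm_coe_le_norm _
        calc |f (An n ω (Xn n ω)) - f (A (Xn n ω))|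
            ≤ |(f (An n ω (Xn n ω)) : ℝ)| + |(f (A (Xn n ω)) : ℝ)| := abs_sub _ _
          _ ≤ C + C := add_le_add hh1 hh2
          _ ≤ ε/2 + 2*C := by linarith
      · rw [Set.indicator_of_notMem hωE, add_zero]
        simp only [hE, Set.mem_union, Set.mem_preimage, Set.mem_compl_iff,
          Set.mem_setOf_eq, not_or, not_not, not_le] at hωE
        obtain ⟨hωK, hωd⟩ := hωE
        have hmem : A (Xn n ω) ∈ K' := Set.mem_image_of_mem A hωK
        have hcl := hδ (A (Xn n ω)) (An n ω (Xn n ω)) (by rwa [dist_comm]) hmem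
        rw [Real.dist_eq] at hcl
        rw [abs_sub_comm]
        exact hcl.le
    -- integrate
    have hintE : Integrable (E.indicator (fun _ => 2*C)) μ :=
      (integrable_const (2*C)).indicator hEmeas
    have hintsum : Integrable (fun ω => ε/2 + E.indicator (fun _ => 2*C) ω) μ :=
      (integrable_const (ε/2)).add hintE
    have hI1 : Integrable (fun ω => f (An n ω (Xn n ω))) μ := hint _ (hYmeas n)
    have hI2 : Integrable (fun ω => f (A (Xn n ω))) μ :=
      hint _ (A.continuous.measurable.comp (hXnmeas n))
    have key : ‖(∫ ω, f (An n ω (Xn n ω)) ∂μ) - ∫ ω, f (A (Xn n ω)) ∂μ‖ ≤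
        ε/2 + 2*C*(4*η) := by
      rw [← integral_sub hI1 hI2, Real.norm_eq_abs]
      calc |∫ ω, (f (An n ω (Xn n ω)) - f (A (Xn n ω))) ∂μ|
          ≤ ∫ ω, |f (An n ω (Xn n ω)) - f (A (Xn n ω))| ∂μ := by
            simpa [Real.norm_eq_abs] using norm_integral_le_integral_norm
              (μ := μ) (fun ω => (f (An n ω (Xn n ω)) : ℝ) - f (A (Xn n ω)))
        _ ≤ ∫ ω, (ε/2 + E.indicator (fun _ => 2*C) ω) ∂μ := by
            apply integral_mono (hI1.sub hI2).abs hintsum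
            exact hpt
        _ = ε/2 + (μ E).toReal * (2*C) := by
            rw [integral_add (integrable_const _) hintE, integral_const,
              integral_indicator_const _ hEmeas]
            simp [measure_univ, Measure.real]
        _ ≤ ε/2 + 2*C*(4*η) := by nlinarith
    have hfinal : ε/2 + 2*C*(4*η) < ε := by
      have h20 : 20*(C+1)*η = ε := by
        rw [hηdef, mul_comm, div_mul_cancel₀]
        exact ne_of_gt (by positivity)
      nlinarith [hη0, hε]
    exact lt_of_le_of_lt key hfinal
  have hsum := hdiff.add h2
  rw [zero_add] at hsum
  convert hsum using 2 with n
  ring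

end
end
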